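/- Let F be a field of characteristic 5. Then there exist 10 pairwise distinct lines in ℙ²(F) having exactly 13 triple points, exactly 6 double points, and no point of multiplicity greater than 3. Explicitly, the lines x = 0, y = 0, z = 0, 3x+y+z = 0, x+3y+z = 0, 2x+2y+z = 0, x+y+z = 0, 2x+4y = 0, 3y+z = 0, 2x+z = 0 form such a configuration. -/

import Mathlib

/-- The projective plane over `F` (also used, by duality, for the lines of that plane). -/
abbrev ProjPlane (F : Type*) [Field F] := Projectivization F (Fin 3 → F)

/-- The point `P` lies on the line `L` (a line is recorded by the projective class of the
coefficient vector of a defining linear form): the pairing of representatives vanishes.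
This does not depend on the choice of representatives. -/
def OnLine {F : Type*} [Field F] (P L : ProjPlane F) : Prop :=
  dotProduct P.rep L.rep = 0

/-- The multiplicity of a point `P` with respect to a configuration `lines`:
the number of lines of the configuration passing through `P`. -/
noncomputable def mult {F : Type*} [Field F] (lines : Set (ProjPlane F))
    (P : ProjPlane F) : ℕ :=
  {L ∈ lines | OnLine P L}.ncard

/-- A vector with a nonzero coordinate is nonzero. -/
lemma vec_ne_zero {F : Type*} [Field F] (c : Fin 3 → F) (i : Fin 3) (h : c i ≠ 0) :
    c ≠ 0 := fun h0 => h (by rw [h0]; rfl)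

/- ======================= auxiliary development ======================= -/

set_option maxRecDepth 100000

open Matrix Projectivization

instance : Fact (Nat.Prime 5) := ⟨by norm_num⟩

abbrev K5 := ZMod 5
abbrev P2 := Projectivization K5 (Fin 3 → K5)

instance : DecidableEq P2 := fun a b =>
  Quotient.recOnSubsingleton₂ a b fun v w =>
    decidable_of_iff (∃ t : K5, t • (w : Fin 3 → K5) = (v : Fin 3 → K5)) (by
      rw [← Projectivization.mk_eq_mk_iff' K5 v.1 w.1 v.2 w.2]
      exact Iff.rfl)

def onLineBV (w : Fin 3 → K5) (L : P2) : Bool :=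
  Projectivization.lift (fun v => decide (w ⬝ᵥ v.1 = 0)) (by
    rintro ⟨a, ha⟩ ⟨b, hb⟩ t h
    simp only at h
    subst h
    have ht : t ≠ 0 := by rintro rfl; simp at ha
    simp [dotProduct_smul, smul_eq_mul, mul_eq_zero, ht]) L

lemma onLineBV_mk (w v : Fin 3 → K5) (hv : v ≠ 0) :
    onLineBV w (Projectivization.mk K5 v hv) = decide (w ⬝ᵥ v = 0) := rfl

def lines₀ : Finset P2 :=
  { Projectivization.mk K5 ![1,0,0] (by decide), Projectivization.mk K5 ![0,1,0] (by decide),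
    Projectivization.mk K5 ![0,0,1] (by decide), Projectivization.mk K5 ![3,1,1] (by decide),
    Projectivization.mk K5 ![1,3,1] (by decide), Projectivization.mk K5 ![2,2,1] (by decide),
    Projectivization.mk K5 ![1,1,1] (by decide), Projectivization.mk K5 ![2,4,0] (by decide),
    Projectivization.mk K5 ![0,3,1] (by decide), Projectivization.mk K5 ![2,0,1] (by decide) }

def mult5V (w : Fin 3 → K5) : ℕ := (lines₀.filter (fun L => onLineBV w L)).card

lemma onLineBV_smul {t : K5} (ht : t ≠ 0) (b : Fin 3 → K5) (L : P2) :
    onLineBV (t • b) L = onLineBV b L := by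
  induction' L using Projectivization.ind with v hv
  rw [onLineBV_mk, onLineBV_mk, decide_eq_decide, smul_dotProduct]
  simp [smul_eq_mul, mul_eq_zero, ht]

lemma mult5V_smul {t : K5} (ht : t ≠ 0) (b : Fin 3 → K5) : mult5V (t • b) = mult5V b := by
  unfold mult5V
  congr 1
  apply Finset.filter_congr
  intro L _
  rw [onLineBV_smul ht]

def mult5Q (Q : P2) : ℕ :=
  Projectivization.lift (fun w => mult5V w.1) (by
    rintro ⟨a, ha⟩ ⟨b, hb⟩ t h
    simp only at h
    subst h
    have ht : t ≠ 0 := by rintro rfl; simp at ha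
    exact mult5V_smul ht b) Q

lemma mult5Q_mk (w : Fin 3 → K5) (hw : w ≠ 0) :
    mult5Q (Projectivization.mk K5 w hw) = mult5V w := rfl

def reps3 : List (Fin 3 → K5) :=
  [![0,0,1], ![0,1,0], ![0,1,2], ![0,1,4], ![1,0,0], ![1,0,3], ![1,0,4],
   ![1,1,1], ![1,2,0], ![1,2,3], ![1,2,4], ![1,4,0], ![1,4,3]]

def reps2 : List (Fin 3 → K5) :=
  [![0,1,3], ![1,0,2], ![1,1,3], ![1,2,2], ![1,3,0], ![1,3,1]]

def pts3 : Finset P2 :=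
  { Projectivization.mk K5 ![0,0,1] (by decide), Projectivization.mk K5 ![0,1,0] (by decide),
    Projectivization.mk K5 ![0,1,2] (by decide), Projectivization.mk K5 ![0,1,4] (by decide),
    Projectivization.mk K5 ![1,0,0] (by decide), Projectivization.mk K5 ![1,0,3] (by decide),
    Projectivization.mk K5 ![1,0,4] (by decide), Projectivization.mk K5 ![1,1,1] (by decide),
    Projectivization.mk K5 ![1,2,0] (by decide), Projectivization.mk K5 ![1,2,3] (by decide),
    Projectivization.mk K5 ![1,2,4] (by decide), Projectivization.mk K5 ![1,4,0] (by decide),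
    Projectivization.mk K5 ![1,4,3] (by decide) }

def pts2 : Finset P2 :=
  { Projectivization.mk K5 ![0,1,3] (by decide), Projectivization.mk K5 ![1,0,2] (by decide),
    Projectivization.mk K5 ![1,1,3] (by decide), Projectivization.mk K5 ![1,2,2] (by decide),
    Projectivization.mk K5 ![1,3,0] (by decide), Projectivization.mk K5 ![1,3,1] (by decide) }

lemma key3 : ∀ w : Fin 3 → K5, w ≠ 0 → (mult5V w = 3 ↔ ∃ v ∈ reps3, ∃ t : K5, t • v = w) := by
  decide

lemma key2 : ∀ w : Fin 3 → K5, w ≠ 0 → (mult5V w = 2 ↔ ∃ v ∈ reps2, ∃ t : K5, t • v = w) := by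
  decide

lemma keyle : ∀ w : Fin 3 → K5, w ≠ 0 → mult5V w ≤ 3 := by decide

lemma lines₀_card : lines₀.card = 10 := by decide

lemma pts3_card : pts3.card = 13 := by decide

lemma pts2_card : pts2.card = 6 := by decide

lemma set3 : {Q : P2 | mult5Q Q = 3} = ↑pts3 := by
  ext Q
  induction' Q using Projectivization.ind with w hw
  simp only [Set.mem_setOf_eq, mult5Q_mk, Finset.mem_coe]
  rw [key3 w hw]
  constructor
  · rintro ⟨v, hv, t, ht⟩
    have hv0 : v ≠ 0 := by rintro rfl; exact hw (by rw [← ht]; simp)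
    have hmk : Projectivization.mk K5 w hw = Projectivization.mk K5 v hv0 :=
      (mk_eq_mk_iff' _ _ _ _ _).mpr ⟨t, ht⟩
    rw [hmk]
    clear hmk ht hw
    fin_cases hv <;>
      simp only [pts3, Finset.mem_insert, Finset.mem_singleton, eq_self_iff_true, true_or,
        or_true]
  · intro hQ
    simp only [pts3, Finset.mem_insert, Finset.mem_singleton] at hQ
    rcases hQ with h|h|h|h|h|h|h|h|h|h|h|h|h <;>
      exact ⟨_, by decide, (mk_eq_mk_iff' _ _ _ _ _).mp h⟩

lemma set2 : {Q : P2 | mult5Q Q = 2} = ↑pts2 := by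
  ext Q
  induction' Q using Projectivization.ind with w hw
  simp only [Set.mem_setOf_eq, mult5Q_mk, Finset.mem_coe]
  rw [key2 w hw]
  constructor
  · rintro ⟨v, hv, t, ht⟩
    have hv0 : v ≠ 0 := by rintro rfl; exact hw (by rw [← ht]; simp)
    have hmk : Projectivization.mk K5 w hw = Projectivization.mk K5 v hv0 :=
      (mk_eq_mk_iff' _ _ _ _ _).mpr ⟨t, ht⟩
    rw [hmk]
    clear hmk ht hw
    fin_cases hv <;>
      simp only [pts2, Finset.mem_insert, Finset.mem_singleton, eq_self_iff_true, true_or,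
        or_true]
  · intro hQ
    simp only [pts2, Finset.mem_insert, Finset.mem_singleton] at hQ
    rcases hQ with h|h|h|h|h|h <;>
      exact ⟨_, by decide, (mk_eq_mk_iff' _ _ _ _ _).mp h⟩

lemma multQ_le : ∀ Q : P2, mult5Q Q ≤ 3 := by
  intro Q
  induction' Q using Projectivization.ind with w hw
  rw [mult5Q_mk]
  exact keyle w hw

/- ======================= transfer to F ======================= -/

section Transfer

variable (F : Type*) [Field F] [CharP F 5]

def phi5 : K5 →+* F := ZMod.castHom dvd_rfl F

lemma phi5_inj : Function.Injective (phi5 F) := (phi5 F).injective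

def sigma5 : (Fin 3 → K5) →ₛₗ[phi5 F] (Fin 3 → F) where
  toFun v := fun i => phi5 F (v i)
  map_add' v w := by funext i; simp
  map_smul' t v := by funext i; simp

lemma sigma5_inj : Function.Injective (sigma5 F) :=
  fun v w h => funext fun i => phi5_inj F (congrFun h i)

def mapP : P2 → ProjPlane F := Projectivization.map (sigma5 F) (sigma5_inj F)

lemma sigma_ne (v : Fin 3 → K5) (hv : v ≠ 0) : (fun i => phi5 F (v i)) ≠ 0 := by
  intro h0
  apply hv
  funext i
  exact phi5_inj F (by simpa using congrFun h0 i)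

lemma mapP_mk (v : Fin 3 → K5) (hv : v ≠ 0) :
    mapP F (Projectivization.mk K5 v hv)
      = Projectivization.mk F (fun i => phi5 F (v i)) (sigma_ne F v hv) := rfl

lemma mapP_mk' (v : Fin 3 → K5) (hv : v ≠ 0) (w : Fin 3 → F) (hw : w ≠ 0)
    (h : (fun i => phi5 F (v i)) = w) :
    mapP F (Projectivization.mk K5 v hv) = Projectivization.mk F w hw := by
  subst h
  exact mapP_mk F v hv

lemma mapP_inj : Function.Injective (mapP F) := by
  intro Q Q' h
  induction' Q using Projectivization.ind with v hv
  induction' Q' using Projectivization.ind with w hw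
  rw [mapP_mk, mapP_mk, mk_eq_mk_iff'] at h
  obtain ⟨a, ha⟩ := h
  obtain ⟨k, hk⟩ := Function.ne_iff.mp hw
  simp only [Pi.zero_apply] at hk
  have hwk : phi5 F (w k) ≠ 0 := fun h0 => hk (phi5_inj F (by rw [h0, map_zero]))
  have hk' := congrFun ha k
  simp only [Pi.smul_apply, smul_eq_mul] at hk'
  have hak : a = phi5 F (v k) * (phi5 F (w k))⁻¹ :=
    (eq_mul_inv_iff_mul_eq₀ hwk).mpr hk'
  rw [mk_eq_mk_iff']
  refine ⟨v k * (w k)⁻¹, funext fun i => phi5_inj F ?_⟩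
  have hi := congrFun ha i
  simp only [Pi.smul_apply, smul_eq_mul] at hi ⊢
  rw [_root_.map_mul, _root_.map_mul, map_inv₀, ← hak]
  exact hi

lemma rep_mk_smul {E : Type*} [Field E] (v : Fin 3 → E) (hv : v ≠ 0) :
    ∃ a : Eˣ, (Projectivization.mk E v hv).rep = (a : E) • v := by
  obtain ⟨a, ha⟩ := (mk_eq_mk_iff E _ _ (Projectivization.rep_nonzero _) hv).mp
    (Projectivization.mk_rep (Projectivization.mk E v hv))
  exact ⟨a, by rw [← ha]; rfl⟩

lemma onLine_mk_mk {E : Type*} [Field E] (w v : Fin 3 → E) (hw : w ≠ 0) (hv : v ≠ 0) :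
    OnLine (Projectivization.mk E w hw) (Projectivization.mk E v hv) ↔ w ⬝ᵥ v = 0 := by
  obtain ⟨a, ha⟩ := rep_mk_smul w hw
  obtain ⟨b, hb⟩ := rep_mk_smul v hv
  unfold OnLine
  rw [ha, hb, smul_dotProduct, dotProduct_smul, smul_eq_mul, smul_eq_mul,
    mul_eq_zero, mul_eq_zero]
  simp [a.ne_zero, b.ne_zero]

lemma onLine_mapP (w : Fin 3 → K5) (hw : w ≠ 0) (L : P2) :
    OnLine (mapP F (Projectivization.mk K5 w hw)) (mapP F L) ↔ onLineBV w L = true := by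
  induction' L using Projectivization.ind with v hv
  rw [mapP_mk, mapP_mk, onLine_mk_mk, onLineBV_mk, decide_eq_true_iff]
  have hdot : (fun i => phi5 F (w i)) ⬝ᵥ (fun i => phi5 F (v i)) = phi5 F (w ⬝ᵥ v) := by
    rw [RingHom.map_dotProduct]
    rfl
  rw [hdot, map_eq_zero_iff _ (phi5_inj F)]

def linesF : Set (ProjPlane F) := mapP F '' ↑lines₀

lemma mult_mapP (Q : P2) : mult (linesF F) (mapP F Q) = mult5Q Q := by
  induction' Q using Projectivization.ind with w hw
  rw [mult5Q_mk]
  unfold mult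
  have him : {L ∈ linesF F | OnLine (mapP F (Projectivization.mk K5 w hw)) L}
      = mapP F '' {L₀ ∈ (lines₀ : Set P2) | onLineBV w L₀ = true} := by
    ext L
    constructor
    · rintro ⟨⟨L₀, hL₀, rfl⟩, hO⟩
      exact ⟨L₀, ⟨hL₀, (onLine_mapP F w hw L₀).mp hO⟩, rfl⟩
    · rintro ⟨L₀, ⟨h₀, hB⟩, rfl⟩
      exact ⟨⟨L₀, h₀, rfl⟩, (onLine_mapP F w hw L₀).mpr hB⟩
  rw [him, Set.ncard_image_of_injective _ (mapP_inj F)]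
  have hcoe : {L₀ ∈ (lines₀ : Set P2) | onLineBV w L₀ = true}
      = ↑(lines₀.filter (fun L => onLineBV w L)) := by
    ext L; simp
  rw [hcoe, Set.ncard_coe_finset]
  rfl

lemma cross_phi (v v' : Fin 3 → K5) :
    (fun i => phi5 F (v i)) ⨯₃ (fun i => phi5 F (v' i)) = fun i => phi5 F ((v ⨯₃ v') i) := by
  funext i
  fin_cases i <;>
    simp [cross_apply, _root_.map_sub, _root_.map_mul]

lemma ortho_prop {E : Type*} [Field E] (w v v' : Fin 3 → E) (hw : w ≠ 0) (hc : v ⨯₃ v' ≠ 0)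
    (h1 : w ⬝ᵥ v = 0) (h2 : w ⬝ᵥ v' = 0) :
    Projectivization.mk E w hw = Projectivization.mk E (v ⨯₃ v') hc := by
  have e1 : w 0 * v 0 + w 1 * v 1 + w 2 * v 2 = 0 := by
    simpa [dotProduct, Fin.sum_univ_three] using h1
  have e2 : w 0 * v' 0 + w 1 * v' 1 + w 2 * v' 2 = 0 := by
    simpa [dotProduct, Fin.sum_univ_three] using h2
  have key : ∀ i j, w i * (v ⨯₃ v') j = w j * (v ⨯₃ v') i := by
    intro i j
    fin_cases i <;> fin_cases j <;> simp [cross_apply]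
    · linear_combination v 2 * e2 - v' 2 * e1
    · linear_combination v' 1 * e1 - v 1 * e2
    · linear_combination v' 2 * e1 - v 2 * e2
    · linear_combination v 0 * e2 - v' 0 * e1
    · linear_combination v 1 * e2 - v' 1 * e1
    · linear_combination v' 0 * e1 - v 0 * e2
  obtain ⟨k, hk⟩ := Function.ne_iff.mp hc
  simp only [Pi.zero_apply] at hk
  rw [mk_eq_mk_iff']
  refine ⟨w k * ((v ⨯₃ v') k)⁻¹, funext fun i => ?_⟩
  simp only [Pi.smul_apply, smul_eq_mul]
  field_simp
  linear_combination key k i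

lemma mem_range_of_two (P : ProjPlane F) (h : 2 ≤ mult (linesF F) P) :
    ∃ Q : P2, mapP F Q = P := by
  have hfin2 : {L ∈ linesF F | OnLine P L}.Finite :=
    ((lines₀.finite_toSet.image (mapP F))).subset (fun x hx => hx.1)
  have h2 : 1 < {L ∈ linesF F | OnLine P L}.ncard := by
    unfold mult at h; omega
  obtain ⟨L, hL, L', hL', hne⟩ := (Set.one_lt_ncard hfin2).mp h2
  obtain ⟨⟨L₀, hL₀, rfl⟩, hOL⟩ := hL
  obtain ⟨⟨L₀', hL₀', rfl⟩, hOL'⟩ := hL'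
  clear hL₀ hL₀' h2 h hfin2
  induction' L₀ using Projectivization.ind with v hv
  induction' L₀' using Projectivization.ind with v' hv'
  rw [mapP_mk] at hOL hne
  rw [mapP_mk] at hOL' hne
  set fv : Fin 3 → F := fun i => phi5 F (v i) with hfv
  set fv' : Fin 3 → F := fun i => phi5 F (v' i) with hfv'
  have hfv0 : fv ≠ 0 := hfv ▸ sigma_ne F v hv
  have hfv'0 : fv' ≠ 0 := hfv' ▸ sigma_ne F v' hv'
  have hO1 : P.rep ⬝ᵥ fv = 0 := by
    obtain ⟨a, ha⟩ := rep_mk_smul fv hfv0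
    unfold OnLine at hOL
    rw [ha, dotProduct_smul, smul_eq_mul, mul_eq_zero] at hOL
    rcases hOL with h0 | h0
    · exact absurd h0 a.ne_zero
    · exact h0
  have hO2 : P.rep ⬝ᵥ fv' = 0 := by
    obtain ⟨a, ha⟩ := rep_mk_smul fv' hfv'0
    unfold OnLine at hOL'
    rw [ha, dotProduct_smul, smul_eq_mul, mul_eq_zero] at hOL'
    rcases hOL' with h0 | h0
    · exact absurd h0 a.ne_zero
    · exact h0
  have hcross : fv ⨯₃ fv' ≠ 0 := by
    rw [crossProduct_ne_zero_iff_linearIndependent, linearIndependent_fin2]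
    refine ⟨by simpa using hfv'0, fun a hgood => ?_⟩
    simp only [Matrix.cons_val_one, Matrix.head_cons, Matrix.cons_val_zero] at hgood
    exact hne ((mk_eq_mk_iff' _ _ _ _ _).mpr ⟨a, hgood⟩)
  have hmk := ortho_prop P.rep fv fv' P.rep_nonzero hcross hO1 hO2
  have hc5 : (v ⨯₃ v') ≠ 0 := by
    intro h0
    apply hcross
    rw [cross_phi, h0]
    funext i
    simp
  refine ⟨Projectivization.mk K5 (v ⨯₃ v') hc5, ?_⟩
  rw [mapP_mk]
  rw [← Projectivization.mk_rep P, hmk]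
  apply (mk_eq_mk_iff' _ _ _ _ _).mpr
  exact ⟨1, by rw [one_smul, cross_phi]⟩

lemma mult_le (P : ProjPlane F) : mult (linesF F) P ≤ 3 := by
  by_cases h : 2 ≤ mult (linesF F) P
  · obtain ⟨Q, rfl⟩ := mem_range_of_two F P h
    rw [mult_mapP]
    exact multQ_le Q
  · omega

lemma setF3 : {P : ProjPlane F | mult (linesF F) P = 3} = mapP F '' ↑pts3 := by
  rw [← set3]
  ext P
  constructor
  · intro hP
    obtain ⟨Q, rfl⟩ := mem_range_of_two F P (by rw [Set.mem_setOf_eq] at hP; omega)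
    rw [Set.mem_setOf_eq, mult_mapP] at hP
    exact ⟨Q, hP, rfl⟩
  · rintro ⟨Q, hQ, rfl⟩
    rw [Set.mem_setOf_eq, mult_mapP]
    exact hQ

lemma setF2 : {P : ProjPlane F | mult (linesF F) P = 2} = mapP F '' ↑pts2 := by
  rw [← set2]
  ext P
  constructor
  · intro hP
    obtain ⟨Q, rfl⟩ := mem_range_of_two F P (by rw [Set.mem_setOf_eq] at hP; omega)
    rw [Set.mem_setOf_eq, mult_mapP] at hP
    exact ⟨Q, hP, rfl⟩
  · rintro ⟨Q, hQ, rfl⟩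
    rw [Set.mem_setOf_eq, mult_mapP]
    exact hQ

lemma mk_congr {E : Type*} [Field E] {v w : Fin 3 → E} (hv : v ≠ 0) (h : v = w) :
    Projectivization.mk E v hv = Projectivization.mk E w (h ▸ hv) := by subst h; rfl

end Transfer

/- ======================= the theorem ======================= -/

theorem ten_lines_char_five (F : Type*) [Field F] [CharP F 5] :
    ∃ lines : Set (ProjPlane F),
      lines = {Projectivization.mk F ![1, 0, 0] (vec_ne_zero _ 0 (by simp)),
               Projectivization.mk F ![0, 1, 0] (vec_ne_zero _ 1 (by simp)),
               Projectivization.mk F ![0, 0, 1] (vec_ne_zero _ 2 (by simp)),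
               Projectivization.mk F ![3, 1, 1] (vec_ne_zero _ 1 (by simp)),
               Projectivization.mk F ![1, 3, 1] (vec_ne_zero _ 0 (by simp)),
               Projectivization.mk F ![2, 2, 1] (vec_ne_zero _ 2 (by simp)),
               Projectivization.mk F ![1, 1, 1] (vec_ne_zero _ 0 (by simp)),
               Projectivization.mk F ![2, 4, 0] (vec_ne_zero _ 0 (by
                  intro h
                  have h2 : ((2 : ℕ) : F) = 0 := by exact_mod_cast h
                  have := (CharP.cast_eq_zero_iff F 5 2).mp h2
                  norm_num at this)),
               Projectivization.mk F ![0, 3, 1] (vec_ne_zero _ 2 (by simp)),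
               Projectivization.mk F ![2, 0, 1] (vec_ne_zero _ 2 (by simp))} ∧
      lines.ncard = 10 ∧
      {P : ProjPlane F | mult lines P = 3}.ncard = 13 ∧
      {P : ProjPlane F | mult lines P = 2}.ncard = 6 ∧
      ∀ P : ProjPlane F, mult lines P ≤ 3 := by
  refine ⟨linesF F, ?_, ?_, ?_, ?_, ?_⟩
  · show mapP F '' ↑lines₀ = _
    have e1 : mapP F (Projectivization.mk K5 ![1,0,0] (by decide))
        = Projectivization.mk F ![1,0,0] (vec_ne_zero _ 0 (by simp)) :=
      mapP_mk' F _ _ _ _ (by funext i; fin_cases i <;> simp [map_ofNat])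
    have e2 : mapP F (Projectivization.mk K5 ![0,1,0] (by decide))
        = Projectivization.mk F ![0,1,0] (vec_ne_zero _ 1 (by simp)) :=
      mapP_mk' F _ _ _ _ (by funext i; fin_cases i <;> simp [map_ofNat])
    have e3 : mapP F (Projectivization.mk K5 ![0,0,1] (by decide))
        = Projectivization.mk F ![0,0,1] (vec_ne_zero _ 2 (by simp)) :=
      mapP_mk' F _ _ _ _ (by funext i; fin_cases i <;> simp [map_ofNat])
    have e4 : mapP F (Projectivization.mk K5 ![3,1,1] (by decide))
        = Projectivization.mk F ![3,1,1] (vec_ne_zero _ 1 (by simp)) :=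
      mapP_mk' F _ _ _ _ (by funext i; fin_cases i <;> simp [map_ofNat])
    have e5 : mapP F (Projectivization.mk K5 ![1,3,1] (by decide))
        = Projectivization.mk F ![1,3,1] (vec_ne_zero _ 0 (by simp)) :=
      mapP_mk' F _ _ _ _ (by funext i; fin_cases i <;> simp [map_ofNat])
    have e6 : mapP F (Projectivization.mk K5 ![2,2,1] (by decide))
        = Projectivization.mk F ![2,2,1] (vec_ne_zero _ 2 (by simp)) :=
      mapP_mk' F _ _ _ _ (by funext i; fin_cases i <;> simp [map_ofNat])
    have e7 : mapP F (Projectivization.mk K5 ![1,1,1] (by decide))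
        = Projectivization.mk F ![1,1,1] (vec_ne_zero _ 0 (by simp)) :=
      mapP_mk' F _ _ _ _ (by funext i; fin_cases i <;> simp [map_ofNat])
    have e8 : mapP F (Projectivization.mk K5 ![2,4,0] (by decide))
        = Projectivization.mk F ![2,4,0] (vec_ne_zero _ 0 (by
        intro h
        have h2 : ((2 : ℕ) : F) = 0 := by exact_mod_cast h
        have := (CharP.cast_eq_zero_iff F 5 2).mp h2
        norm_num at this)) :=
      mapP_mk' F _ _ _ _ (by funext i; fin_cases i <;> simp [map_ofNat])
    have e9 : mapP F (Projectivization.mk K5 ![0,3,1] (by decide))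
        = Projectivization.mk F ![0,3,1] (vec_ne_zero _ 2 (by simp)) :=
      mapP_mk' F _ _ _ _ (by funext i; fin_cases i <;> simp [map_ofNat])
    have e10 : mapP F (Projectivization.mk K5 ![2,0,1] (by decide))
        = Projectivization.mk F ![2,0,1] (vec_ne_zero _ 2 (by simp)) :=
      mapP_mk' F _ _ _ _ (by funext i; fin_cases i <;> simp [map_ofNat])
    simp only [lines₀, Finset.coe_insert, Finset.coe_singleton, Set.image_insert_eq,
      Set.image_singleton, e1, e2, e3, e4, e5, e6, e7, e8, e9, e10]
  · show (mapP F '' ↑lines₀).ncard = 10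
    rw [Set.ncard_image_of_injective _ (mapP_inj F), Set.ncard_coe_finset, lines₀_card]
  · rw [setF3, Set.ncard_image_of_injective _ (mapP_inj F), Set.ncard_coe_finset, pts3_card]
  · rw [setF2, Set.ncard_image_of_injective _ (mapP_inj F), Set.ncard_coe_finset, pts2_card]
  · exact mult_le F
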